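/- Let X and Y be metric spaces, 0 < ε/2 < ω < δ < ε, and let f : X → Y be a basepoint-preserving σ-isometry for a constant σ with 0 ≤ σ < min{ε − δ, (δ − ω)/4}. Then for any δ-chain α in X, the induced δ-to-ε class satisfies |f_#([α]_δ)| ≤ |[α]_δ| + σ(4|[α]_δ|/ε + 1), where |[γ]| denotes the infimum of lengths of chains in the homotopy class. -/

import Mathlib

noncomputable section
open Metric

variable {X : Type*} [MetricSpace X]

def IsEpsChain (ε : ℝ) (l : List X) : Prop :=
  l ≠ [] ∧ l.Chain' (fun a b => dist a b < ε)

def chainLength : List X → ℝ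
  | a :: b :: t => dist a b + chainLength (b :: t)
  | _ => 0

def conc (α β : List X) : List X := α ++ β.tail

def Insertion (α β : List X) : Prop :=
  ∃ (p s : List X) (x : X), p ≠ [] ∧ s ≠ [] ∧ α = p ++ s ∧ β = p ++ x :: s

def Move (ε : ℝ) (α β : List X) : Prop :=
  IsEpsChain ε α ∧ IsEpsChain ε β ∧ (Insertion α β ∨ Insertion β α)

def EpsHomotopic (ε : ℝ) : List X → List X → Prop :=
  Relation.ReflTransGen (Move ε)

def IsEpsNull (ε : ℝ) (l : List X) : Prop := ∃ x, EpsHomotopic ε l [x]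

def IsGeodesicSpace (Y : Type*) [MetricSpace Y] : Prop :=
  ∀ x y : Y, ∃ γ : ℝ → Y, γ 0 = x ∧ γ (dist x y) = y ∧
    ∀ s ∈ Set.Icc (0:ℝ) (dist x y), ∀ t ∈ Set.Icc (0:ℝ) (dist x y),
      dist (γ s) (γ t) = |s - t|

def ChainConnected (Y : Type*) [MetricSpace Y] : Prop :=
  ∀ ε > (0:ℝ), ∀ x y : Y, ∃ l : List Y, IsEpsChain ε l ∧ l.head? = some x ∧ l.getLast? = some y

theorem epsHomotopic_equiv (ε : ℝ) : Equivalence (EpsHomotopic (X := X) ε) := by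
  refine ⟨fun _ => Relation.ReflTransGen.refl, ?_, fun h h' => h.trans h'⟩
  intro a b h
  induction h with
  | refl => exact Relation.ReflTransGen.refl
  | tail _ hxy ih => exact Relation.ReflTransGen.head ⟨hxy.2.1, hxy.1, hxy.2.2.symm⟩ ih

/-- `|[α]_ε| = inf { L(γ) : γ ε-homotopic to α }`. -/
def classNorm (ε : ℝ) (α : List X) : ℝ :=
  sInf {r | ∃ γ : List X, EpsHomotopic ε α γ ∧ r = chainLength γ}

/-! ### Auxiliary lemmas for statement8 -/

lemma chainLength_nonneg : ∀ l : List X, 0 ≤ chainLength l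
  | [] => le_refl 0
  | [_] => le_refl 0
  | a :: b :: t => by
      have := chainLength_nonneg (b :: t)
      have := dist_nonneg (x := a) (y := b)
      show 0 ≤ dist a b + chainLength (b :: t)
      linarith

lemma chain_of_homotopic {δ : ℝ} {α β : List X} (h : EpsHomotopic δ α β)
    (hα : IsEpsChain δ α) : IsEpsChain δ β := by
  induction h with
  | refl => exact hα
  | tail _ hmove _ => exact hmove.2.1

lemma isEpsChain_map {Y : Type*} [MetricSpace Y] {δ ε σ : ℝ} {f : X → Y}
    (hdist : ∀ x y : X, |dist x y - dist (f x) (f y)| ≤ σ) (hδσ : δ + σ < ε)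
    {l : List X} (h : IsEpsChain δ l) : IsEpsChain ε (l.map f) := by
  refine ⟨by simpa using h.1, ?_⟩
  rw [List.Chain', List.isChain_map]
  refine (show List.IsChain _ l from h.2).imp fun a b hab => ?_
  have h1 := (abs_le.mp (hdist a b)).1
  linarith

lemma insertion_map {Y : Type*} (f : X → Y) {α β : List X} (h : Insertion α β) :
    Insertion (α.map f) (β.map f) := by
  obtain ⟨p, s, x, hp, hs, h1, h2⟩ := h
  exact ⟨p.map f, s.map f, f x, by simpa using hp, by simpa using hs,
    by simp [h1], by simp [h2]⟩

lemma epsHomotopic_map {Y : Type*} [MetricSpace Y] {δ ε σ : ℝ} {f : X → Y}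
    (hdist : ∀ x y : X, |dist x y - dist (f x) (f y)| ≤ σ) (hδσ : δ + σ < ε)
    {α β : List X} (h : EpsHomotopic δ α β) :
    EpsHomotopic ε (α.map f) (β.map f) :=
  Relation.ReflTransGen.lift (List.map f) (fun _ _ hab =>
    ⟨isEpsChain_map hdist hδσ hab.1, isEpsChain_map hdist hδσ hab.2.1,
     hab.2.2.imp (insertion_map f) (insertion_map f)⟩) _ _ h

lemma chainLength_map_le {Y : Type*} [MetricSpace Y] {σ : ℝ} {f : X → Y}
    (hdist : ∀ x y : X, |dist x y - dist (f x) (f y)| ≤ σ) :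
    ∀ l : List X, l ≠ [] → chainLength (l.map f) ≤ chainLength l + σ * ((l.length : ℝ) - 1)
  | [], h => absurd rfl h
  | [a], _ => by simp [chainLength]
  | a :: b :: t, _ => by
      have ih := chainLength_map_le hdist (b :: t) (by simp)
      have h1 := (abs_le.mp (hdist a b)).1
      show dist (f a) (f b) + chainLength ((b :: t).map f) ≤
        dist a b + chainLength (b :: t) + σ * (((a :: b :: t).length : ℝ) - 1)
      simp only [List.length_cons] at ih ⊢
      push_cast at ih ⊢
      linarith

/-- A chain is reduced if every second-neighbour pair is at distance at least `δ`. -/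
def Red (δ : ℝ) : List X → Prop
  | a :: b :: c :: t => δ ≤ dist a c ∧ Red δ (b :: c :: t)
  | _ => True

lemma red_nil {δ : ℝ} : Red (X := X) δ [] := by simp [Red]

lemma red_one {δ : ℝ} (a : X) : Red δ [a] := by simp [Red]

lemma red_two {δ : ℝ} (a b : X) : Red δ [a, b] := by simp [Red]

lemma red_cons3 {δ : ℝ} (a b c : X) (t : List X) :
    Red δ (a :: b :: c :: t) ↔ δ ≤ dist a c ∧ Red δ (b :: c :: t) := by
  simp [Red]

lemma red_tail {δ : ℝ} : ∀ {x : X} {l : List X}, Red δ (x :: l) → Red δ l := by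
  intro x l h
  match l with
  | [] => exact red_nil
  | [a] => exact red_one a
  | a :: b :: t => exact ((red_cons3 x a b t).mp h).2

lemma red_count (δ : ℝ) (hδ : 0 < δ) :
    ∀ l : List X, Red δ l → δ * ((l.length : ℝ) - 2) ≤ 2 * chainLength l
  | [] => fun _ => by simp [chainLength]; nlinarith
  | [a] => fun _ => by simp [chainLength]; nlinarith
  | [a, b] => fun _ => by
      have : (0:ℝ) ≤ dist a b := dist_nonneg
      simp [chainLength]
  | a :: b :: c :: t => fun h => by
      obtain ⟨hac, hrest⟩ := (red_cons3 a b c t).mp h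
      have ih := red_count δ hδ (c :: t) (red_tail hrest)
      have htri := dist_triangle a b c
      show δ * (((a :: b :: c :: t).length : ℝ) - 2) ≤
        2 * (dist a b + (dist b c + chainLength (c :: t)))
      simp only [List.length_cons] at ih ⊢
      push_cast at ih ⊢
      nlinarith

lemma not_red_decomp (δ : ℝ) : ∀ l : List X, ¬ Red δ l →
    ∃ (p : List X) (a b c : X) (s : List X), l = p ++ a :: b :: c :: s ∧ dist a c < δ
  | [] => fun h => absurd red_nil h
  | [a] => fun h => absurd (red_one a) h
  | [a, b] => fun h => absurd (red_two a b) h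
  | a :: b :: c :: t => fun h => by
      by_cases hac : δ ≤ dist a c
      · have hrest : ¬ Red δ (b :: c :: t) := fun hr => h ((red_cons3 a b c t).mpr ⟨hac, hr⟩)
        obtain ⟨p, x, y, z, s, heq, hd⟩ := not_red_decomp δ (b :: c :: t) hrest
        exact ⟨a :: p, x, y, z, s, by rw [List.cons_append, ← heq], hd⟩
      · exact ⟨[], a, b, c, t, rfl, lt_of_not_ge hac⟩

lemma chain'_remove {R : X → X → Prop} {p s : List X} {a b c : X}
    (h : List.Chain' R (p ++ a :: b :: c :: s)) (hac : R a c) :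
    List.Chain' R (p ++ a :: c :: s) := by
  rw [List.Chain', List.isChain_append] at h ⊢
  obtain ⟨h1, h2, h3⟩ := h
  refine ⟨h1, ?_, by simpa using h3⟩
  simp only [List.isChain_cons_cons] at h2 ⊢
  exact ⟨hac, h2.2.2⟩

lemma chainLength_remove (b : X) :
    ∀ (p : List X) (a c : X) (s : List X),
      chainLength (p ++ a :: c :: s) ≤ chainLength (p ++ a :: b :: c :: s)
  | [], a, c, s => by
      have htri := dist_triangle a b c
      show dist a c + chainLength (c :: s) ≤
        dist a b + (dist b c + chainLength (c :: s))
      linarith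
  | [x], a, c, s => by
      have := chainLength_remove b [] a c s
      show dist x a + chainLength (a :: c :: s) ≤ dist x a + chainLength (a :: b :: c :: s)
      simpa using this
  | x :: y :: p, a, c, s => by
      have ih := chainLength_remove b (y :: p) a c s
      show dist x y + chainLength (y :: p ++ a :: c :: s) ≤
        dist x y + chainLength (y :: p ++ a :: b :: c :: s)
      linarith

lemma reduce (δ : ℝ) : ∀ n : ℕ, ∀ l : List X, l.length ≤ n → IsEpsChain δ l →
    ∃ l', EpsHomotopic δ l l' ∧ IsEpsChain δ l' ∧ chainLength l' ≤ chainLength l ∧ Red δ l' := by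
  intro n
  induction n with
  | zero => intro l hn h; exact absurd (List.length_eq_zero_iff.mp (Nat.le_zero.mp hn)) h.1
  | succ n ih =>
      intro l hn h
      by_cases hred : Red δ l
      · exact ⟨l, Relation.ReflTransGen.refl, h, le_refl _, hred⟩
      · obtain ⟨p, a, b, c, s, heq, hac⟩ := not_red_decomp δ l hred
        set l' := p ++ a :: c :: s with hl'
        have hl'chain : IsEpsChain δ l' := by
          refine ⟨by simp [hl'], ?_⟩
          have := h.2
          rw [heq] at this
          exact chain'_remove this hac
        have hmove : Move δ l l' := by
          refine ⟨h, hl'chain, Or.inr ?_⟩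
          exact ⟨p ++ [a], c :: s, b, by simp, by simp,
            by simp [hl'], by simp [heq]⟩
        have hlen : chainLength l' ≤ chainLength l := by
          rw [heq]; exact chainLength_remove b p a c s
        have hlt : l'.length ≤ n := by
          have h1 : l.length = l'.length + 1 := by simp [heq, hl']; ring
          omega
        obtain ⟨l'', hhom, hch, hlen', hred'⟩ := ih l' hlt hl'chain
        exact ⟨l'', Relation.ReflTransGen.head hmove hhom, hch, le_trans hlen' hlen, hred'⟩

/-- Length bound for the induced map `f_#` of a constant σ-isometry:
`|f_#([α]_δ)| ≤ |[α]_δ| + σ(4|[α]_δ|/ε + 1)`. -/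
theorem statement8 {Y : Type*} [MetricSpace Y] (ε ω δ σ : ℝ) (x0 : X) (y0 : Y)
    (h1 : 0 < ε) (h2 : ε / 2 < ω) (h3 : ω < δ) (h4 : δ < ε)
    (hσ0 : 0 ≤ σ) (hσ : σ < min (ε - δ) ((δ - ω) / 4))
    (f : X → Y) (hbase : f x0 = y0)
    (hdist : ∀ x y : X, |dist x y - dist (f x) (f y)| ≤ σ)
    (hnet : ∀ z : Y, ∃ w : X, dist z (f w) ≤ σ)
    (α : List X) (hα : IsEpsChain δ α) :
    classNorm ε (α.map f) ≤ classNorm δ α + σ * (4 * classNorm δ α / ε + 1) := by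
  have hδ : 0 < δ := by linarith
  have hσε : σ < ε - δ := lt_of_lt_of_le hσ (min_le_left _ _)
  have hδσ : δ + σ < ε := by linarith
  set S := {r | ∃ γ : List X, EpsHomotopic δ α γ ∧ r = chainLength γ} with hS
  set T := {r | ∃ γ : List Y, EpsHomotopic ε (α.map f) γ ∧ r = chainLength γ} with hT
  have hSne : S.Nonempty := ⟨chainLength α, α, Relation.ReflTransGen.refl, rfl⟩
  have hSbd : BddBelow S := ⟨0, by rintro r ⟨γ, _, rfl⟩; exact chainLength_nonneg γ⟩
  have hTbd : BddBelow T := ⟨0, by rintro r ⟨γ, _, rfl⟩; exact chainLength_nonneg γ⟩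
  have hcS : classNorm δ α = sInf S := rfl
  have hcT : classNorm ε (α.map f) = sInf T := rfl
  have key : ∀ r ∈ S, classNorm ε (α.map f) ≤ r + σ * (4 * r / ε + 1) := by
    rintro r ⟨γ, hhom, rfl⟩
    have hγ : IsEpsChain δ γ := chain_of_homotopic hhom hα
    obtain ⟨γ', hhom', hγ', hlen, hred⟩ := reduce δ γ.length γ le_rfl hγ
    have hmem : chainLength (γ'.map f) ∈ T :=
      ⟨γ'.map f, epsHomotopic_map hdist hδσ (hhom.trans hhom'), rfl⟩
    have hstep1 : classNorm ε (α.map f) ≤ chainLength (γ'.map f) := by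
      rw [hcT]; exact csInf_le hTbd hmem
    have hstep2 := chainLength_map_le hdist γ' hγ'.1
    have hstep3 := red_count δ hδ γ' hred
    have hL' : 0 ≤ chainLength γ' := chainLength_nonneg _
    have hL : 0 ≤ chainLength γ := chainLength_nonneg _
    have h4 : (γ'.length : ℝ) - 1 ≤ 4 * chainLength γ' / ε + 1 := by
      have hdd : 2 * chainLength γ' / δ ≤ 4 * chainLength γ' / ε := by
        rw [div_le_div_iff₀ hδ h1]
        nlinarith
      have : (γ'.length : ℝ) - 2 ≤ 2 * chainLength γ' / δ := by
        rw [le_div_iff₀ hδ]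
        nlinarith
      linarith
    have hmul : σ * ((γ'.length : ℝ) - 1) ≤ σ * (4 * chainLength γ' / ε + 1) :=
      mul_le_mul_of_nonneg_left h4 hσ0
    have hmono : 4 * chainLength γ' / ε ≤ 4 * chainLength γ / ε := by
      gcongr
    calc classNorm ε (α.map f) ≤ chainLength (γ'.map f) := hstep1
      _ ≤ chainLength γ' + σ * ((γ'.length : ℝ) - 1) := hstep2
      _ ≤ chainLength γ' + σ * (4 * chainLength γ' / ε + 1) := by linarith
      _ ≤ chainLength γ + σ * (4 * chainLength γ / ε + 1) := by nlinarith
  rw [hcS]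
  refine le_of_forall_pos_le_add ?_
  intro η hη
  have hc : 0 < 1 + 4 * σ / ε := by positivity
  obtain ⟨r, hrS, hr⟩ := Real.lt_sInf_add_pos hSne (div_pos hη hc)
  have hkey := key r hrS
  have hrle : r ≤ sInf S + η / (1 + 4 * σ / ε) := le_of_lt hr
  have hcancel : (η / (1 + 4 * σ / ε)) * (1 + 4 * σ / ε) = η :=
    div_mul_cancel₀ _ (ne_of_gt hc)
  have hmono2 : r + σ * (4 * r / ε + 1) ≤
      (sInf S + η / (1 + 4 * σ / ε)) + σ * (4 * (sInf S + η / (1 + 4 * σ / ε)) / ε + 1) := by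
    have h5 : 4 * r / ε ≤ 4 * (sInf S + η / (1 + 4 * σ / ε)) / ε := by
      gcongr
    nlinarith
  have hfinal : (sInf S + η / (1 + 4 * σ / ε)) +
      σ * (4 * (sInf S + η / (1 + 4 * σ / ε)) / ε + 1) =
      sInf S + σ * (4 * sInf S / ε + 1) + η := by
    field_simp at hcancel ⊢
    nlinarith [hcancel]
  linarith [hkey, hmono2, hfinal.le]
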